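/- If (λ, w) is a classical solution of the critical cell problem at (x̄, p̄), then min_{y ∈ ℝ^m} |σ(x̄,y)^T p̄|² ≤ λ ≤ max_{y ∈ ℝ^m} |σ(x̄,y)^T p̄|² (the min and max are attained by periodicity and continuity). -/

import Mathlib

open Matrix MeasureTheory Set

noncomputable section

/-- Euclidean norm of a vector in `ℝ^k`. -/
def en {k : ℕ} (v : Fin k → ℝ) : ℝ := Real.sqrt (v ⬝ᵥ v)

/-- Squared Euclidean norm. -/
def sq2 {k : ℕ} (v : Fin k → ℝ) : ℝ := v ⬝ᵥ v

/-- Partial derivative in the `i`-th coordinate direction. -/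
def pd {m : ℕ} (w : (Fin m → ℝ) → ℝ) (i : Fin m) (y : Fin m → ℝ) : ℝ :=
  fderiv ℝ w y (Pi.single i 1)

/-- Gradient. -/
def vgrad {m : ℕ} (w : (Fin m → ℝ) → ℝ) (y : Fin m → ℝ) : Fin m → ℝ := fun i => pd w i y

/-- Hessian matrix. -/
def vhess {m : ℕ} (w : (Fin m → ℝ) → ℝ) (y : Fin m → ℝ) : Matrix (Fin m) (Fin m) ℝ :=
  Matrix.of fun i j => pd (pd w j) i y

/-- `ℤ^m`-periodicity. -/
def ZPer {m : ℕ} (w : (Fin m → ℝ) → ℝ) : Prop :=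
  ∀ (y : Fin m → ℝ) (k : Fin m → ℤ), w (y + fun i => (k i : ℝ)) = w y

/-- Standing hypotheses on the data. -/
structure StandingHyp {n m r : ℕ}
    (σ : (Fin n → ℝ) → (Fin m → ℝ) → Matrix (Fin n) (Fin r) ℝ)
    (b : (Fin m → ℝ) → Fin m → ℝ)
    (τ : (Fin m → ℝ) → Matrix (Fin m) (Fin r) ℝ) : Prop where
  σ_bdd : ∃ C : ℝ, ∀ x y i j, |σ x y i j| ≤ C
  σ_lip : ∃ L : ℝ, ∀ x x' y y' i j, |σ x y i j - σ x' y' i j| ≤ L * (en (x - x') + en (y - y'))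
  σ_per : ∀ x y (k : Fin m → ℤ), σ x (y + fun l => (k l : ℝ)) = σ x y
  b_lip : ∃ L : ℝ, ∀ y y' i, |b y i - b y' i| ≤ L * en (y - y')
  b_per : ∀ y (k : Fin m → ℤ), b (y + fun l => (k l : ℝ)) = b y
  τ_lip : ∃ L : ℝ, ∀ y y' i j, |τ y i j - τ y' i j| ≤ L * en (y - y')
  τ_per : ∀ y (k : Fin m → ℤ), τ (y + fun l => (k l : ℝ)) = τ y
  τ_nondeg : ∃ θ : ℝ, 0 < θ ∧ ∀ y ξ, θ * sq2 ξ ≤ sq2 ((τ y)ᵀ *ᵥ ξ)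

/-- Classical solution of the critical cell problem at `(x, p)`. -/
def IsCriticalSol {n m r : ℕ}
    (σ : (Fin n → ℝ) → (Fin m → ℝ) → Matrix (Fin n) (Fin r) ℝ)
    (b : (Fin m → ℝ) → Fin m → ℝ)
    (τ : (Fin m → ℝ) → Matrix (Fin m) (Fin r) ℝ)
    (x p : Fin n → ℝ) (lam : ℝ) (w : (Fin m → ℝ) → ℝ) : Prop :=
  ContDiff ℝ 2 w ∧ ZPer w ∧
    ∀ y, lam = sq2 ((σ x y)ᵀ *ᵥ p)
        + 2 * ((τ y *ᵥ ((σ x y)ᵀ *ᵥ p)) ⬝ᵥ vgrad w y)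
        + b y ⬝ᵥ vgrad w y
        + sq2 ((τ y)ᵀ *ᵥ vgrad w y)
        + Matrix.trace (τ y * (τ y)ᵀ * vhess w y)

/-- Classical solution of the supercritical cell problem at `(x, p)`. -/
def IsSupercriticalSol {n m r : ℕ}
    (σ : (Fin n → ℝ) → (Fin m → ℝ) → Matrix (Fin n) (Fin r) ℝ)
    (b : (Fin m → ℝ) → Fin m → ℝ)
    (τ : (Fin m → ℝ) → Matrix (Fin m) (Fin r) ℝ)
    (x p : Fin n → ℝ) (lam : ℝ) (w : (Fin m → ℝ) → ℝ) : Prop :=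
  ContDiff ℝ 2 w ∧ ZPer w ∧
    ∀ y, lam = sq2 ((σ x y)ᵀ *ᵥ p) + b y ⬝ᵥ vgrad w y
        + Matrix.trace (τ y * (τ y)ᵀ * vhess w y)

/-- Classical solution of the subcritical cell problem at `(x, p)`. -/
def IsSubcriticalSol {n m r : ℕ}
    (σ : (Fin n → ℝ) → (Fin m → ℝ) → Matrix (Fin n) (Fin r) ℝ)
    (τ : (Fin m → ℝ) → Matrix (Fin m) (Fin r) ℝ)
    (x p : Fin n → ℝ) (lam : ℝ) (w : (Fin m → ℝ) → ℝ) : Prop :=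
  ContDiff ℝ 1 w ∧ ZPer w ∧
    ∀ y, lam = sq2 ((τ y)ᵀ *ᵥ vgrad w y + (σ x y)ᵀ *ᵥ p)



/-! ### Auxiliary lemmas -/

-- 1-d second derivative test at a global max
lemma aux_second_le_zero {g G : ℝ → ℝ} {G' : ℝ}
    (hg : ∀ t, HasDerivAt g (G t) t) (hG : HasDerivAt G G' 0)
    (hmax : ∀ t, g t ≤ g 0) : G' ≤ 0 := by
  by_contra hc
  push_neg at hc
  have hG0 : G 0 = 0 :=
    (IsLocalMax.hasDerivAt_eq_zero (Filter.Eventually.of_forall hmax) (hg 0))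
  have hs : Filter.Tendsto (fun t => G t / t) (nhdsWithin 0 {(0:ℝ)}ᶜ) (nhds G') := by
    have h1 := hasDerivAt_iff_tendsto_slope.mp hG
    have : (slope G 0) = fun t => G t / t := by
      funext t; rw [slope_def_field, hG0]; ring_nf
    rwa [this] at h1
  have hev : ∀ᶠ t in nhdsWithin 0 {(0:ℝ)}ᶜ, 0 < G t / t := hs.eventually (eventually_gt_nhds hc)
  rw [eventually_nhdsWithin_iff] at hev
  rw [Metric.eventually_nhds_iff] at hev
  obtain ⟨δ, hδ, hball⟩ := hev
  set t₀ := δ/2 with ht₀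
  have ht₀pos : 0 < t₀ := by positivity
  have hcont : ContinuousOn g (Icc 0 t₀) :=
    (continuous_iff_continuousAt.mpr (fun t => (hg t).continuousAt)).continuousOn
  obtain ⟨c, hc1, hc2⟩ := exists_hasDerivAt_eq_slope g G ht₀pos hcont (fun x _ => hg x)
  have hGc : 0 < G c / c := by
    apply hball (y := c) ?_ ?_
    · rw [Real.dist_eq, sub_zero, abs_of_pos hc1.1]
      calc c < t₀ := hc1.2
        _ < δ := by rw [ht₀]; linarith
    · simp [ne_of_gt hc1.1]
  have hGcpos : 0 < G c := by
    by_contra h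
    push_neg at h
    have := div_nonpos_of_nonpos_of_nonneg h (le_of_lt hc1.1)
    linarith
  have : G c ≤ 0 := by
    rw [hc2]
    apply div_nonpos_of_nonpos_of_nonneg
    · linarith [hmax t₀]
    · linarith
  linarith

lemma aux_clm_apply_sum {m : ℕ} (f : (Fin m → ℝ) →L[ℝ] ℝ) (v : Fin m → ℝ) :
    f v = ∑ i, v i * f (Pi.single i 1) := by
  have hv : v = ∑ i, (Pi.single i (v i) : Fin m → ℝ) := (Finset.univ_sum_single v).symm
  calc f v = f (∑ i, (Pi.single i (v i) : Fin m → ℝ)) := by rw [← hv]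
    _ = ∑ i, f (Pi.single i (v i)) := map_sum f _ _
    _ = ∑ i, v i * f (Pi.single i 1) := by
        apply Finset.sum_congr rfl
        intro i _
        have : (Pi.single i (v i) : Fin m → ℝ) = v i • (Pi.single i 1 : Fin m → ℝ) := by
          funext j
          by_cases h : j = i <;> simp [h, Pi.single_apply]
        rw [this, _root_.map_smul, smul_eq_mul]

lemma aux_Qmax_le_zero {m : ℕ} {w : (Fin m → ℝ) → ℝ} (hw : ContDiff ℝ 2 w)
    {y : Fin m → ℝ} (hmax : ∀ z, w z ≤ w y) (v : Fin m → ℝ) :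
    fderiv ℝ (fun z => fderiv ℝ w z v) y v ≤ 0 := by
  have hw1 : Differentiable ℝ w := hw.differentiable (by norm_num)
  have hF : ContDiff ℝ 1 (fun z => fderiv ℝ w z v) :=
    (hw.fderiv_right (by norm_num)).clm_apply contDiff_const
  have hline : ∀ t : ℝ, HasDerivAt (fun s : ℝ => y + s • v) v t := by
    intro t
    simpa using ((hasDerivAt_id t).smul_const v).const_add y
  have hg : ∀ t : ℝ, HasDerivAt (fun s => w (y + s • v)) (fderiv ℝ w (y + t • v) v) t :=
    fun t => (hw1 _).hasFDerivAt.comp_hasDerivAt t (hline t)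
  have hG : HasDerivAt (fun t : ℝ => fderiv ℝ w (y + t • v) v)
      (fderiv ℝ (fun z => fderiv ℝ w z v) y v) 0 := by
    have := ((hF.differentiable one_ne_zero) (y + (0:ℝ) • v)).hasFDerivAt.comp_hasDerivAt 0 (hline 0)
    simpa [Function.comp_def] using this
  exact aux_second_le_zero hg hG (fun t => by simpa using hmax (y + t • v))

lemma aux_Qmin_ge_zero {m : ℕ} {w : (Fin m → ℝ) → ℝ} (hw : ContDiff ℝ 2 w)
    {y : Fin m → ℝ} (hmin : ∀ z, w y ≤ w z) (v : Fin m → ℝ) :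
    0 ≤ fderiv ℝ (fun z => fderiv ℝ w z v) y v := by
  have hn := aux_Qmax_le_zero hw.neg (fun z => neg_le_neg (hmin z)) v
  have h1 : (fun z => fderiv ℝ (fun x => -w x) z v) = fun z => -(fderiv ℝ w z v) := by
    funext z; rw [fderiv_fun_neg]; simp
  rw [h1, fderiv_fun_neg] at hn
  simp at hn
  linarith

lemma aux_Q_eq {m : ℕ} {w : (Fin m → ℝ) → ℝ} (hw : ContDiff ℝ 2 w) (y v : Fin m → ℝ) :
    fderiv ℝ (fun z => fderiv ℝ w z v) y v = ∑ i, v i * ∑ j, v j * pd (pd w i) j y := by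
  have hpdC : ∀ i : Fin m, ContDiff ℝ 1 (pd w i) := by
    intro i
    exact (hw.fderiv_right (by norm_num)).clm_apply contDiff_const
  have h1 : (fun z => fderiv ℝ w z v) = fun z => ∑ i, v i * pd w i z := by
    funext z
    exact aux_clm_apply_sum (fderiv ℝ w z) v
  rw [h1]
  have h2 : HasFDerivAt (fun z => ∑ i, v i * pd w i z)
      (∑ i, v i • fderiv ℝ (pd w i) y) y := by
    apply HasFDerivAt.fun_sum
    intro i _
    exact ((hpdC i).differentiable one_ne_zero y).hasFDerivAt.const_mul (v i)
  rw [h2.fderiv]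
  rw [ContinuousLinearMap.sum_apply]
  apply Finset.sum_congr rfl
  intro i _
  rw [ContinuousLinearMap.smul_apply, smul_eq_mul]
  congr 1
  have := aux_clm_apply_sum (fderiv ℝ (pd w i) y) v
  rw [this]
  rfl

lemma aux_per_max {m : ℕ} (f : (Fin m → ℝ) → ℝ) (hf : Continuous f) (hp : ZPer f) :
    ∃ y, ∀ z, f z ≤ f y := by
  have hne : (0 : Fin m → ℝ) ∈ Icc (0 : Fin m → ℝ) 1 := by
    constructor <;> intro i <;> norm_num
  obtain ⟨y, -, hy⟩ := (isCompact_Icc (a := (0 : Fin m → ℝ)) (b := 1)).exists_isMaxOn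
    ⟨0, hne⟩ hf.continuousOn
  refine ⟨y, fun z => ?_⟩
  have h1 : f (fun i => Int.fract (z i)) = f z := by
    have h2 := hp z (fun i => -⌊z i⌋)
    rw [← h2]
    congr 1
    funext i
    show Int.fract (z i) = z i + ((-⌊z i⌋ : ℤ) : ℝ)
    rw [Int.fract]
    push_cast
    ring
  rw [← h1]
  exact isMaxOn_iff.mp hy _ ⟨fun i => Int.fract_nonneg _, fun i => (Int.fract_lt_one _).le⟩

lemma aux_en_le {k : ℕ} (v : Fin k → ℝ) : en v ≤ Real.sqrt k * ‖v‖ := by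
  rw [en]
  have h1 : v ⬝ᵥ v ≤ (k : ℝ) * ‖v‖ ^ 2 := by
    rw [dotProduct]
    calc ∑ i, v i * v i ≤ ∑ _i : Fin k, ‖v‖ ^ 2 := by
          apply Finset.sum_le_sum
          intro i _
          have h2 : |v i| ≤ ‖v‖ := norm_le_pi_norm v i
          nlinarith [abs_nonneg (v i), le_abs_self (v i), neg_abs_le (v i)]
      _ = (k : ℝ) * ‖v‖ ^ 2 := by
          rw [Finset.sum_const, Finset.card_univ, Fintype.card_fin, nsmul_eq_mul]
  calc Real.sqrt (v ⬝ᵥ v) ≤ Real.sqrt ((k : ℝ) * ‖v‖ ^ 2) := Real.sqrt_le_sqrt h1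
    _ = Real.sqrt k * ‖v‖ := by
        rw [Real.sqrt_mul (Nat.cast_nonneg k), Real.sqrt_sq (norm_nonneg _)]

lemma aux_lip_cont {m : ℕ} {f : (Fin m → ℝ) → ℝ} {L : ℝ}
    (h : ∀ y y', |f y - f y'| ≤ L * en (y - y')) : Continuous f := by
  set C : ℝ := max L 0 * Real.sqrt m with hC
  have hC0 : 0 ≤ C := mul_nonneg (le_max_right _ _) (Real.sqrt_nonneg _)
  apply (LipschitzWith.of_dist_le_mul (K := C.toNNReal) ?_).continuous
  intro y y'
  have h1 := h y y'
  have hen0 : 0 ≤ en (y - y') := Real.sqrt_nonneg _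
  have h2 : L * en (y - y') ≤ max L 0 * en (y - y') :=
    mul_le_mul_of_nonneg_right (le_max_left _ _) hen0
  have h3 : max L 0 * en (y - y') ≤ max L 0 * (Real.sqrt m * ‖y - y'‖) :=
    mul_le_mul_of_nonneg_left (aux_en_le _) (le_max_right _ _)
  have h4 : (C.toNNReal : ℝ) = C := Real.coe_toNNReal _ hC0
  rw [Real.dist_eq, dist_eq_norm, h4]
  calc |f y - f y'| ≤ max L 0 * (Real.sqrt m * ‖y - y'‖) := le_trans h1 (le_trans h2 h3)
    _ = C * ‖y - y'‖ := by rw [hC]; ring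

lemma aux_trace_eq {m r : ℕ} (T : Matrix (Fin m) (Fin r) ℝ) (H : Matrix (Fin m) (Fin m) ℝ) :
    Matrix.trace (T * Tᵀ * H) = ∑ k, ∑ i, T i k * ∑ j, T j k * H j i := by
  simp only [Matrix.trace, Matrix.diag, Matrix.mul_apply, Matrix.transpose_apply,
    Finset.sum_mul, Finset.mul_sum]
  rw [Finset.sum_comm]
  conv_lhs => enter [2,x]; rw [Finset.sum_comm]
  rw [Finset.sum_comm]
  conv_lhs => enter [2,k]; rw [Finset.sum_comm]
  apply Finset.sum_congr rfl
  intro k _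
  apply Finset.sum_congr rfl
  intro i _
  apply Finset.sum_congr rfl
  intro j _
  ring

/-- the critical effective Hamiltonian lies between the min and max of
`|σ(x̄,y)ᵀ p̄|²` over `y` (min and max being attained, by periodicity and continuity). -/
theorem stmt2 {n m r : ℕ}
    (σ : (Fin n → ℝ) → (Fin m → ℝ) → Matrix (Fin n) (Fin r) ℝ)
    (b : (Fin m → ℝ) → Fin m → ℝ)
    (τ : (Fin m → ℝ) → Matrix (Fin m) (Fin r) ℝ)
    (hyp : StandingHyp σ b τ)
    (xbar pbar : Fin n → ℝ) (lam : ℝ) (w : (Fin m → ℝ) → ℝ)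
    (h : IsCriticalSol σ b τ xbar pbar lam w) :
    ∃ y₀ y₁ : Fin m → ℝ,
      (∀ y, sq2 ((σ xbar y₀)ᵀ *ᵥ pbar) ≤ sq2 ((σ xbar y)ᵀ *ᵥ pbar)) ∧
      (∀ y, sq2 ((σ xbar y)ᵀ *ᵥ pbar) ≤ sq2 ((σ xbar y₁)ᵀ *ᵥ pbar)) ∧
      sq2 ((σ xbar y₀)ᵀ *ᵥ pbar) ≤ lam ∧ lam ≤ sq2 ((σ xbar y₁)ᵀ *ᵥ pbar) := by
  obtain ⟨hw, hwper, heq⟩ := h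
  set f : (Fin m → ℝ) → ℝ := fun y => sq2 ((σ xbar y)ᵀ *ᵥ pbar) with hf
  -- continuity of f
  have hentry : ∀ i j, Continuous (fun y => σ xbar y i j) := by
    intro i j
    obtain ⟨L, hL⟩ := hyp.σ_lip
    apply aux_lip_cont (L := L)
    intro y y'
    have h1 := hL xbar xbar y y' i j
    have h0 : en (xbar - xbar) = 0 := by
      simp [en, sub_self, zero_dotProduct]
    rw [h0, zero_add] at h1
    exact h1
  have hfc : Continuous f := by
    have hfe : f = fun y => ∑ k, (∑ i, σ xbar y i k * pbar i) * (∑ i, σ xbar y i k * pbar i) := by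
      funext y
      simp [hf, sq2, dotProduct, Matrix.mulVec, Matrix.transpose_apply]
    rw [hfe]
    apply continuous_finset_sum
    intro k _
    exact (continuous_finset_sum _ fun i _ => (hentry i k).mul continuous_const).mul
      (continuous_finset_sum _ fun i _ => (hentry i k).mul continuous_const)
  have hfper : ZPer f := by
    intro y k
    simp only [hf]
    rw [hyp.σ_per xbar y k]
  -- extrema of f
  obtain ⟨y₁, hy₁⟩ := aux_per_max f hfc hfper
  obtain ⟨y₀, hy₀'⟩ := aux_per_max (fun y => -f y) (hfc.neg) (fun y k => by simp [hfper y k])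
  have hy₀ : ∀ z, f y₀ ≤ f z := fun z => by have := hy₀' z; simpa using this
  -- extrema of w
  obtain ⟨ymax, hymax⟩ := aux_per_max w hw.continuous hwper
  obtain ⟨ymin, hymin'⟩ := aux_per_max (fun y => -w y) (hw.continuous.neg)
    (fun y k => by simp [hwper y k])
  have hymin : ∀ z, w ymin ≤ w z := fun z => by have := hymin' z; simpa using this
  -- gradient vanishes at extrema
  have hgmax : vgrad w ymax = 0 := by
    have hfz : fderiv ℝ w ymax = 0 :=
      IsLocalMax.fderiv_eq_zero (Filter.Eventually.of_forall hymax)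
    funext i
    show fderiv ℝ w ymax (Pi.single i 1) = 0
    rw [hfz]
    rfl
  have hgmin : vgrad w ymin = 0 := by
    have hfz : fderiv ℝ w ymin = 0 :=
      IsLocalMin.fderiv_eq_zero (Filter.Eventually.of_forall hymin)
    funext i
    show fderiv ℝ w ymin (Pi.single i 1) = 0
    rw [hfz]
    rfl
  -- trace estimates
  have htrmax : Matrix.trace (τ ymax * (τ ymax)ᵀ * vhess w ymax) ≤ 0 := by
    rw [aux_trace_eq]
    apply Finset.sum_nonpos
    intro k _
    have hq := aux_Qmax_le_zero hw hymax (fun i => τ ymax i k)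
    rw [aux_Q_eq hw] at hq
    calc ∑ i, τ ymax i k * ∑ j, τ ymax j k * vhess w ymax j i
        = ∑ i, (fun i => τ ymax i k) i * ∑ j, (fun i => τ ymax i k) j
            * pd (pd w i) j ymax := rfl
      _ ≤ 0 := hq
  have htrmin : 0 ≤ Matrix.trace (τ ymin * (τ ymin)ᵀ * vhess w ymin) := by
    rw [aux_trace_eq]
    apply Finset.sum_nonneg
    intro k _
    have hq := aux_Qmin_ge_zero hw hymin (fun i => τ ymin i k)
    rw [aux_Q_eq hw] at hq
    calc (0:ℝ) ≤ ∑ i, (fun i => τ ymin i k) i * ∑ j, (fun i => τ ymin i k) j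
            * pd (pd w i) j ymin := hq
      _ = ∑ i, τ ymin i k * ∑ j, τ ymin j k * vhess w ymin j i := rfl
  -- PDE at the extrema
  have hmaxeq := heq ymax
  rw [hgmax] at hmaxeq
  simp only [dotProduct_zero, Matrix.mulVec_zero, mul_zero, add_zero] at hmaxeq
  have hz : sq2 (0 : Fin r → ℝ) = 0 := by simp [sq2, zero_dotProduct]
  rw [hz] at hmaxeq
  have hmineq := heq ymin
  rw [hgmin] at hmineq
  simp only [dotProduct_zero, Matrix.mulVec_zero, mul_zero, add_zero] at hmineq
  rw [hz] at hmineq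
  refine ⟨y₀, y₁, hy₀, hy₁, ?_, ?_⟩
  · calc f y₀ ≤ f ymin := hy₀ ymin
      _ ≤ lam := by rw [hmineq]; simpa [hf] using htrmin
  · calc lam ≤ f ymax := by rw [hmaxeq]; simpa [hf] using htrmax
      _ ≤ f y₁ := hy₁ ymax

end
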